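/- Let E ⊆ ℝ^d be open, let A, Ā : E → S^d, B : E → ℝ^d, V : E → ℝ, and let κ̲ > 0 satisfy κ̲ ξᵀA(x)ξ ≤ ξᵀĀ(x)ξ for all x ∈ E and ξ ∈ ℝ^d. For u ∈ C²(E) define 𝔉[u] := (1/2)Σ_{i,j} A_{ij} ∂²_{x_i x_j}u + (1/2)(∇u)ᵀĀ∇u + B·∇u + V, and for ψ ∈ C²(E) define the linear operator 𝒧^ψ w := (1/2)Σ_{i,j} A_{ij} ∂²_{x_i x_j}w + (B + Ā∇ψ)·∇w. Then for any φ, ψ ∈ C²(E), the positive function w := exp(−κ̲(ψ − φ)) belongs to C²(E) and satisfies the pointwise inequality 𝒧^ψ w ≤ κ̲ w (𝔉[φ] − 𝔉[ψ]) on E. -/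

import Mathlib

open Matrix

namespace Stmt2

/-- First partial derivative `∂_{x_i} u (x)`. -/
noncomputable def pd1 (d : ℕ) (u : (Fin d → ℝ) → ℝ) (i : Fin d) (x : Fin d → ℝ) : ℝ :=
  fderiv ℝ u x (Pi.single i 1)

/-- Second partial derivative `∂²_{x_i x_j} u (x)`. -/
noncomputable def pd2 (d : ℕ) (u : (Fin d → ℝ) → ℝ) (i j : Fin d) (x : Fin d → ℝ) : ℝ :=
  fderiv ℝ (fun y => fderiv ℝ u y (Pi.single j 1)) x (Pi.single i 1)

/-- Gradient `∇u(x)`. -/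
noncomputable def grad (d : ℕ) (u : (Fin d → ℝ) → ℝ) (x : Fin d → ℝ) : Fin d → ℝ :=
  fun i => pd1 d u i x

/-- The semilinear operator
`𝔉[u] = (1/2)Σ A_{ij} ∂²_{ij} u + (1/2)(∇u)ᵀ Ā ∇u + B·∇u + V`. -/
noncomputable def Fop (d : ℕ) (A Abar : (Fin d → ℝ) → Matrix (Fin d) (Fin d) ℝ)
    (B : (Fin d → ℝ) → Fin d → ℝ) (V : (Fin d → ℝ) → ℝ)
    (u : (Fin d → ℝ) → ℝ) (x : Fin d → ℝ) : ℝ :=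
  (1 / 2) * ∑ i, ∑ j, A x i j * pd2 d u i j x
    + (1 / 2) * (grad d u x ⬝ᵥ (Abar x).mulVec (grad d u x))
    + (B x ⬝ᵥ grad d u x) + V x

/-- The linear operator `𝒧^ψ w = (1/2)Σ A_{ij} ∂²_{ij} w + (B + Ā∇ψ)·∇w`. -/
noncomputable def Lop (d : ℕ) (A Abar : (Fin d → ℝ) → Matrix (Fin d) (Fin d) ℝ)
    (B : (Fin d → ℝ) → Fin d → ℝ) (ψ : (Fin d → ℝ) → ℝ)
    (w : (Fin d → ℝ) → ℝ) (x : Fin d → ℝ) : ℝ :=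
  (1 / 2) * ∑ i, ∑ j, A x i j * pd2 d w i j x
    + ((B x + (Abar x).mulVec (grad d ψ x)) ⬝ᵥ grad d w x)

/-- for `φ, ψ ∈ C²(E)`, the function `w = exp(-κ̲(ψ - φ))` is `C²` on `E`
and satisfies `𝒧^ψ w ≤ κ̲ w (𝔉[φ] - 𝔉[ψ])` pointwise on `E`. -/
theorem stmt2 (d : ℕ) (E : Set (Fin d → ℝ)) (hE : IsOpen E)
    (A Abar : (Fin d → ℝ) → Matrix (Fin d) (Fin d) ℝ)
    (B : (Fin d → ℝ) → Fin d → ℝ) (V : (Fin d → ℝ) → ℝ) (κ : ℝ) (hκ : 0 < κ)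
    (hAsymm : ∀ x ∈ E, (A x).IsSymm) (hAbarsymm : ∀ x ∈ E, (Abar x).IsSymm)
    (hell : ∀ x ∈ E, ∀ ξ : Fin d → ℝ,
      κ * (ξ ⬝ᵥ (A x).mulVec ξ) ≤ ξ ⬝ᵥ (Abar x).mulVec ξ)
    (φ ψ : (Fin d → ℝ) → ℝ)
    (hφ : ContDiffOn ℝ 2 φ E) (hψ : ContDiffOn ℝ 2 ψ E) :
    ContDiffOn ℝ 2 (fun x => Real.exp (-κ * (ψ x - φ x))) E ∧
    ∀ x ∈ E,
      Lop d A Abar B ψ (fun y => Real.exp (-κ * (ψ y - φ y))) x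
        ≤ κ * Real.exp (-κ * (ψ x - φ x)) *
            (Fop d A Abar B V φ x - Fop d A Abar B V ψ x) := by
  have hwC : ContDiffOn ℝ 2 (fun x => Real.exp (-κ * (ψ x - φ x))) E :=
    Real.contDiff_exp.comp_contDiffOn (contDiffOn_const.mul (hψ.sub hφ))
  refine ⟨hwC, ?_⟩
  intro x hx
  set w : (Fin d → ℝ) → ℝ := fun y => Real.exp (-κ * (ψ y - φ y)) with hwdef
  have hmem : ∀ y ∈ E, E ∈ nhds y := fun y hy => hE.mem_nhds hy
  have hψd : ∀ y ∈ E, DifferentiableAt ℝ ψ y := fun y hy =>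
    (hψ.differentiableOn (by norm_num)).differentiableAt (hmem y hy)
  have hφd : ∀ y ∈ E, DifferentiableAt ℝ φ y := fun y hy =>
    (hφ.differentiableOn (by norm_num)).differentiableAt (hmem y hy)
  -- first derivative of w on E
  have hwD : ∀ y ∈ E, HasFDerivAt w
      (w y • ((-κ) • (fderiv ℝ ψ y - fderiv ℝ φ y))) y := by
    intro y hy
    have h3 : HasFDerivAt (fun z => -κ * (ψ z - φ z))
        ((-κ) • (fderiv ℝ ψ y - fderiv ℝ φ y)) y :=
      (((hψd y hy).hasFDerivAt.sub (hφd y hy).hasFDerivAt)).const_mul (-κ)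
    exact h3.exp
  have hpd1w : ∀ y ∈ E, ∀ j, pd1 d w j y
      = w y * (-κ * (pd1 d ψ j y - pd1 d φ j y)) := by
    intro y hy j
    rw [pd1, (hwD y hy).fderiv]
    simp [pd1]
    try ring
  -- second derivatives
  set W : ℝ := w x with hWdef
  have hWpos : 0 < W := Real.exp_pos _
  set p : Fin d → ℝ := grad d φ x with hpdef
  set q : Fin d → ℝ := grad d ψ x with hqdef
  set a : Fin d → ℝ := q - p with hadef
  have hψ2 : ContDiffAt ℝ 2 ψ x := hψ.contDiffAt (hmem x hx)
  have hφ2 : ContDiffAt ℝ 2 φ x := hφ.contDiffAt (hmem x hx)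
  have hDψ : DifferentiableAt ℝ (fderiv ℝ ψ) x :=
    (hψ2.fderiv_right (m := 1) (by norm_num)).differentiableAt one_ne_zero
  have hDφ : DifferentiableAt ℝ (fderiv ℝ φ) x :=
    (hφ2.fderiv_right (m := 1) (by norm_num)).differentiableAt one_ne_zero
  have hψ'j : ∀ j : Fin d, HasFDerivAt (fun y => fderiv ℝ ψ y (Pi.single j (1:ℝ)))
      ((ContinuousLinearMap.apply ℝ ℝ (Pi.single j (1:ℝ))).comp
        (fderiv ℝ (fderiv ℝ ψ) x)) x := by
    intro j
    exact ((ContinuousLinearMap.apply ℝ ℝ (Pi.single j (1:ℝ))).hasFDerivAt).comp x hDψ.hasFDerivAt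
  have hφ'j : ∀ j : Fin d, HasFDerivAt (fun y => fderiv ℝ φ y (Pi.single j (1:ℝ)))
      ((ContinuousLinearMap.apply ℝ ℝ (Pi.single j (1:ℝ))).comp
        (fderiv ℝ (fderiv ℝ φ) x)) x := by
    intro j
    exact ((ContinuousLinearMap.apply ℝ ℝ (Pi.single j (1:ℝ))).hasFDerivAt).comp x hDφ.hasFDerivAt
  have hpd2ψ : ∀ i j, pd2 d ψ i j x = fderiv ℝ (fderiv ℝ ψ) x (Pi.single i 1) (Pi.single j 1) := by
    intro i j
    rw [pd2, (hψ'j j).fderiv]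
    simp
  have hpd2φ : ∀ i j, pd2 d φ i j x = fderiv ℝ (fderiv ℝ φ) x (Pi.single i 1) (Pi.single j 1) := by
    intro i j
    rw [pd2, (hφ'j j).fderiv]
    simp
  have hpd2w : ∀ i j, pd2 d w i j x
      = κ^2 * W * (a i * a j) - κ * W * (pd2 d ψ i j x - pd2 d φ i j x) := by
    intro i j
    have heq : (fun y => w y * (-κ * (fderiv ℝ ψ y (Pi.single j (1:ℝ))
        - fderiv ℝ φ y (Pi.single j (1:ℝ)))))
        =ᶠ[nhds x] (fun y => fderiv ℝ w y (Pi.single j (1:ℝ))) := by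
      filter_upwards [hmem x hx] with y hy
      rw [(hwD y hy).fderiv]
      simp
      try ring
    have hv : HasFDerivAt (fun y => -κ * (fderiv ℝ ψ y (Pi.single j (1:ℝ))
        - fderiv ℝ φ y (Pi.single j (1:ℝ))))
        ((-κ) • ((((ContinuousLinearMap.apply ℝ ℝ (Pi.single j (1:ℝ))).comp
          (fderiv ℝ (fderiv ℝ ψ) x)))
          - (((ContinuousLinearMap.apply ℝ ℝ (Pi.single j (1:ℝ))).comp
          (fderiv ℝ (fderiv ℝ φ) x))))) x :=
      ((hψ'j j).sub (hφ'j j)).const_mul (-κ)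
    have hu : HasFDerivAt w (W • ((-κ) • (fderiv ℝ ψ x - fderiv ℝ φ x))) x := hwD x hx
    have hprod : HasFDerivAt (fun y => w y * (-κ * (fderiv ℝ ψ y (Pi.single j (1:ℝ))
        - fderiv ℝ φ y (Pi.single j (1:ℝ))))) _ x := hu.mul hv
    rw [pd2, ← heq.fderiv_eq, hprod.fderiv]
    have hai : a i = pd1 d ψ i x - pd1 d φ i x := by
      simp [hadef, hqdef, hpdef, grad]
    have haj : a j = fderiv ℝ ψ x (Pi.single j 1) - fderiv ℝ φ x (Pi.single j 1) := by
      simp [hadef, hqdef, hpdef, grad, pd1]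
    simp [hpd2ψ, hpd2φ, hai, haj, pd1]
    ring
  -- gradient of w at x
  have hgradw : grad d w x = (-(κ * W)) • a := by
    funext i
    have hai : a i = pd1 d ψ i x - pd1 d φ i x := by simp [hadef, hqdef, hpdef, grad]
    show pd1 d w i x = -(κ * W) * a i
    rw [hpd1w x hx i, hai, ← hWdef]
    ring
  -- scalar abbreviations
  set Sψ := ∑ i, ∑ j, A x i j * pd2 d ψ i j x with hSψ
  set Sφ := ∑ i, ∑ j, A x i j * pd2 d φ i j x with hSφ
  set SAa := a ⬝ᵥ (A x).mulVec a with hSAa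
  set Taa := a ⬝ᵥ (Abar x).mulVec a with hTaa
  have hSw : ∑ i, ∑ j, A x i j * pd2 d w i j x
      = κ^2 * W * SAa - κ * W * (Sψ - Sφ) := by
    have key : ∀ i, ∑ j, A x i j * pd2 d w i j x
        = κ^2 * W * (a i * ∑ j, A x i j * a j)
          - κ * W * ((∑ j, A x i j * pd2 d ψ i j x) - (∑ j, A x i j * pd2 d φ i j x)) := by
      intro i
      rw [Finset.mul_sum, Finset.mul_sum, ← Finset.sum_sub_distrib, Finset.mul_sum,
        ← Finset.sum_sub_distrib]
      exact Finset.sum_congr rfl fun j _ => by rw [hpd2w i j]; ring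
    rw [hSψ, hSφ, hSAa]
    simp only [dotProduct, mulVec]
    rw [Finset.mul_sum, ← Finset.sum_sub_distrib, Finset.mul_sum, ← Finset.sum_sub_distrib]
    exact Finset.sum_congr rfl fun i _ => key i
  -- symmetry facts
  have hsymm : q ⬝ᵥ (Abar x).mulVec p = p ⬝ᵥ (Abar x).mulVec q := by
    simp only [dotProduct, mulVec, Finset.mul_sum]
    rw [Finset.sum_comm]
    refine Finset.sum_congr rfl fun i _ => Finset.sum_congr rfl fun j _ => ?_
    rw [(hAbarsymm x hx).apply j i]
    ring
  have hTexp : Taa = q ⬝ᵥ (Abar x).mulVec q - 2 * (q ⬝ᵥ (Abar x).mulVec p)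
      + p ⬝ᵥ (Abar x).mulVec p := by
    rw [hTaa, hadef, Matrix.mulVec_sub, sub_dotProduct, dotProduct_sub,
      dotProduct_sub, hsymm]
    ring
  -- dot products with grad w
  have hdot1 : (B x + (Abar x).mulVec q) ⬝ᵥ grad d w x
      = -(κ * W) * (B x ⬝ᵥ q - B x ⬝ᵥ p + (q ⬝ᵥ (Abar x).mulVec q - q ⬝ᵥ (Abar x).mulVec p)) := by
    rw [hgradw]
    rw [dotProduct_smul, add_dotProduct, hadef, dotProduct_sub,
      dotProduct_sub]
    have h1 : (Abar x).mulVec q ⬝ᵥ q = q ⬝ᵥ (Abar x).mulVec q := dotProduct_comm _ _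
    have h2 : (Abar x).mulVec q ⬝ᵥ p = p ⬝ᵥ (Abar x).mulVec q := dotProduct_comm _ _
    rw [h1, h2, ← hsymm]
    simp
    try ring
  -- key ellipticity
  have hkey : κ * SAa ≤ Taa := hell x hx a
  -- unfold and conclude
  rw [Lop, Fop, Fop, hSw, hdot1]
  rw [← hpdef, ← hqdef, ← hSψ, ← hSφ]
  have hBq : B x ⬝ᵥ grad d ψ x = B x ⬝ᵥ q := by rw [hqdef]
  nlinarith [mul_nonneg (mul_pos hκ hWpos).le (sub_nonneg.mpr hkey), hTexp,
    mul_pos hκ hWpos]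

end Stmt2
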